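/- Let m, n ∈ ℕ, let M' : [m]×[n] → vec be a persistence module, and let M : ℤ² → vec be encoded by M'. Then for every p = (p₁,p₂) ∈ ℤ² with 0 ≤ p₁ ≤ m+1 and 0 ≤ p₂ ≤ n+1, the zeroth bigraded Betti number satisfies β₀(M)(p) = Σ_{J ∈ Con([m]×[n]) : p ∈ J, p−e₁ ∉ J, p−e₂ ∉ J} dgm(M')(J). -/

import Mathlib

open scoped Classical
open Module

noncomputable section

/-- A pointwise finite-dimensional persistence module over a poset `P`. -/
structure PersMod (𝔽 : Type) [Field 𝔽] (P : Type) [PartialOrder P] where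
  V : P → Type
  [iAdd : ∀ p, AddCommGroup (V p)]
  [iMod : ∀ p, Module 𝔽 (V p)]
  [iFin : ∀ p, FiniteDimensional 𝔽 (V p)]
  φ : ∀ {p q : P}, p ≤ q → (V p →ₗ[𝔽] V q)
  φ_refl : ∀ p : P, φ (le_refl p) = LinearMap.id
  φ_comp : ∀ {p q r : P} (hpq : p ≤ q) (hqr : q ≤ r),
    (φ hqr).comp (φ hpq) = φ (le_trans hpq hqr)

attribute [instance] PersMod.iAdd PersMod.iMod PersMod.iFin

/-- A poset is connected if any two elements are joined by a finite zigzag of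
comparable elements. -/
def ZigzagConnected (P : Type) [PartialOrder P] : Prop :=
  ∀ p q : P, Relation.ReflTransGen (fun a b : P => a ≤ b ∨ b ≤ a) p q

section SetNotions

variable {P : Type} [PartialOrder P]

/-- Convexity of a subset of a poset. -/
def SetConvex (I : Set P) : Prop :=
  ∀ ⦃p q r : P⦄, p ∈ I → r ∈ I → p ≤ q → q ≤ r → q ∈ I

/-- Connectedness of a subset: any two points are joined by a zigzag of
comparable elements staying inside the subset. -/
def SetZigzagConn (I : Set P) : Prop :=
  ∀ p ∈ I, ∀ q ∈ I,
    Relation.ReflTransGen (fun a b : P => a ∈ I ∧ b ∈ I ∧ (a ≤ b ∨ b ≤ a)) p q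

/-- An interval of a poset: nonempty, convex and connected. -/
def IsIntervalSet (I : Set P) : Prop :=
  I.Nonempty ∧ SetConvex I ∧ SetZigzagConn I

/-- A path-connected subposet (member of `Con(P)`): nonempty and any two of its
points are joined by a sequence in `I` in which consecutive elements are related
by the covering relation of `P`. -/
def IsPathConnIn (I : Set P) : Prop :=
  I.Nonempty ∧ ∀ p ∈ I, ∀ q ∈ I,
    Relation.ReflTransGen (fun a b : P => a ∈ I ∧ b ∈ I ∧ (a ⋖ b ∨ b ⋖ a)) p q

lemma setConvex_univ : SetConvex (Set.univ : Set P) := by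
  intro p q r _ _ _ _; trivial

end SetNotions

namespace PersMod

variable {𝔽 : Type} [Field 𝔽] {P : Type} [PartialOrder P]

/-- The limit of a persistence module: the module of compatible sections. -/
def sections (M : PersMod 𝔽 P) : Submodule 𝔽 (∀ p, M.V p) where
  carrier := {x | ∀ (p q : P) (h : p ≤ q), M.φ h (x p) = x q}
  add_mem' := by
    intro x y hx hy p q h
    simp only [Pi.add_apply, map_add]
    rw [hx p q h, hy p q h]
  zero_mem' := by intro p q h; simp
  smul_mem' := by
    intro c x hx p q h
    simp only [Pi.smul_apply, map_smul]
    rw [hx p q h]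

/-- The relations defining the colimit of a persistence module. -/
def colimRel (M : PersMod 𝔽 P) : Submodule 𝔽 (DirectSum P fun p => M.V p) :=
  Submodule.span 𝔽 {z | ∃ (p q : P) (h : p ≤ q) (v : M.V p),
    z = DirectSum.lof 𝔽 P (fun p => M.V p) q (M.φ h v)
      - DirectSum.lof 𝔽 P (fun p => M.V p) p v}

/-- The colimit of a persistence module. -/
abbrev colim (M : PersMod 𝔽 P) :=
  (DirectSum P fun p => M.V p) ⧸ M.colimRel

/-- The canonical map `lim M → colim M` factored through the value at `p`,
i.e. `ι_p ∘ π_p`. -/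
def canonicalMapAt (M : PersMod 𝔽 P) (p : P) : M.sections →ₗ[𝔽] M.colim :=
  (M.colimRel.mkQ.comp (DirectSum.lof 𝔽 P (fun q => M.V q) p)).comp
    ((LinearMap.proj p).comp M.sections.subtype)

/-- The rank of the canonical map `lim M → colim M` computed through `p`. -/
def genRankAt (M : PersMod 𝔽 P) (p : P) : ℕ :=
  finrank 𝔽 (LinearMap.range (M.canonicalMapAt p))

/-- The generalized rank of a persistence module over a (connected) poset. -/
def genRank (M : PersMod 𝔽 P) [Nonempty P] : ℕ :=
  M.genRankAt (Classical.arbitrary P)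

/-- Restriction of a persistence module to a subposet. -/
def restrict (M : PersMod 𝔽 P) (I : Set P) : PersMod 𝔽 I where
  V := fun i => M.V i.val
  φ := fun {i j} h => M.φ h
  φ_refl := fun i => M.φ_refl i.val
  φ_comp := fun hpq hqr => M.φ_comp hpq hqr

/-- The generalized rank invariant: the generalized rank of the restriction
of `M` to `I`. -/
def rkInv (M : PersMod 𝔽 P) (I : Set P) : ℕ :=
  if h : I.Nonempty then (M.restrict I).genRankAt ⟨h.choose, h.choose_spec⟩ else 0

/-- Finite direct sums of persistence modules. -/
def dSum {F : Type} [Fintype F] (Ms : F → PersMod 𝔽 P) : PersMod 𝔽 P where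
  V := fun p => ∀ i, (Ms i).V p
  φ := fun {p q} h => LinearMap.pi fun i => ((Ms i).φ h).comp (LinearMap.proj i)
  φ_refl := by
    intro p
    refine LinearMap.ext fun x => funext fun i => ?_
    simp [(Ms i).φ_refl p]
  φ_comp := by
    intro p q r hpq hqr
    refine LinearMap.ext fun x => funext fun i => ?_
    simpa using LinearMap.congr_fun ((Ms i).φ_comp hpq hqr) (x i)

/-- Binary direct sum of persistence modules. -/
def prodMod (M N : PersMod 𝔽 P) : PersMod 𝔽 P where
  V := fun p => M.V p × N.V p
  φ := fun h => (M.φ h).prodMap (N.φ h)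
  φ_refl := by
    intro p
    refine LinearMap.ext fun x => ?_
    simp [M.φ_refl p, N.φ_refl p]
  φ_comp := by
    intro p q r h1 h2
    refine LinearMap.ext fun x => ?_
    have hM := LinearMap.congr_fun (M.φ_comp h1 h2) x.1
    have hN := LinearMap.congr_fun (N.φ_comp h1 h2) x.2
    simp only [LinearMap.comp_apply] at hM hN ⊢
    simp [hM, hN]

/-- The zero persistence module. -/
def IsZero (M : PersMod 𝔽 P) : Prop := ∀ p, Subsingleton (M.V p)

/-- Isomorphism of persistence modules. -/
def Isom (M N : PersMod 𝔽 P) : Prop :=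
  ∃ e : ∀ p, M.V p ≃ₗ[𝔽] N.V p,
    ∀ (p q : P) (h : p ≤ q) (v : M.V p), e q (M.φ h v) = N.φ h (e p v)

/-- Indecomposability of a persistence module. -/
def Indecomposable (M : PersMod 𝔽 P) : Prop :=
  ¬ M.IsZero ∧
    ∀ M₁ M₂ : PersMod 𝔽 P, M.Isom (M₁.prodMod M₂) → M₁.IsZero ∨ M₂.IsZero

end PersMod

section IntervalModule

variable {P : Type} [PartialOrder P]

/-- The fiber of the interval module at `p`: all of `𝔽` if `p ∈ I`, and `0`
otherwise. -/
def fiber (𝔽 : Type) [Field 𝔽] (I : Set P) (p : P) : Submodule 𝔽 𝔽 where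
  carrier := {x | p ∈ I ∨ x = 0}
  zero_mem' := Or.inr rfl
  add_mem' := by
    rintro x y (h | rfl) (h' | rfl)
    · exact Or.inl h
    · exact Or.inl h
    · exact Or.inl h'
    · exact Or.inr (add_zero 0)
  smul_mem' := by
    rintro c x (h | rfl)
    · exact Or.inl h
    · exact Or.inr (smul_zero c)

/-- The interval module `V_I` of a convex subset `I ⊆ P`. -/
def intervalModule (𝔽 : Type) [Field 𝔽] (I : Set P) (hc : SetConvex I) :
    PersMod 𝔽 P where
  V := fun p => fiber 𝔽 I p
  φ := fun {p q} _h =>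
    LinearMap.restrict (if q ∈ I then LinearMap.id else 0)
      (by
        intro x hx
        by_cases hq : q ∈ I
        · rw [if_pos hq]; exact Or.inl hq
        · rw [if_neg hq]; exact Or.inr rfl)
  φ_refl := by
    intro p
    refine LinearMap.ext fun x => Subtype.ext ?_
    rw [LinearMap.restrict_apply]
    by_cases hp : p ∈ I
    · simp [hp]
    · rcases x.2 with h | h
      · exact absurd h hp
      · simp [hp, h]
  φ_comp := by
    intro p q r hpq hqr
    refine LinearMap.ext fun x => Subtype.ext ?_
    simp only [LinearMap.comp_apply, LinearMap.restrict_apply]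
    by_cases hr : r ∈ I <;> by_cases hq : q ∈ I <;> simp [hr, hq]
    rcases x.2 with hp | h0
    · exact absurd (hc hp hr hpq hqr) hq
    · exact h0.symm

end IntervalModule

section Grid

variable {𝔽 : Type} [Field 𝔽]

lemma le_sub_e1 (p : ℤ × ℤ) : ((p.1 - 1, p.2) : ℤ × ℤ) ≤ p :=
  Prod.le_def.mpr ⟨show p.1 - 1 ≤ p.1 by omega, le_rfl⟩

lemma le_sub_e2 (p : ℤ × ℤ) : ((p.1, p.2 - 1) : ℤ × ℤ) ≤ p :=
  Prod.le_def.mpr ⟨le_rfl, show p.2 - 1 ≤ p.2 by omega⟩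

lemma le_sub_e12_e1 (p : ℤ × ℤ) : ((p.1 - 1, p.2 - 1) : ℤ × ℤ) ≤ (p.1 - 1, p.2) :=
  Prod.le_def.mpr ⟨le_rfl, show p.2 - 1 ≤ p.2 by omega⟩

lemma le_sub_e12_e2 (p : ℤ × ℤ) : ((p.1 - 1, p.2 - 1) : ℤ × ℤ) ≤ (p.1, p.2 - 1) :=
  Prod.le_def.mpr ⟨show p.1 - 1 ≤ p.1 by omega, le_rfl⟩

/-- The `0`-th bigraded Betti number of `M : ℤ² → vec` at `p`, defined via the
Koszul complex as the dimension of the cokernel of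
`M(p-e₁) ⊕ M(p-e₂) → M(p)`. -/
def beta0 (M : PersMod 𝔽 (ℤ × ℤ)) (p : ℤ × ℤ) : ℕ :=
  finrank 𝔽
    (M.V p ⧸ LinearMap.range ((M.φ (le_sub_e1 p)).coprod (M.φ (le_sub_e2 p))))

/-- The `2`-nd bigraded Betti number of `M : ℤ² → vec` at `p`, defined via the
Koszul complex as the dimension of the intersection of the kernels of the two
structure maps out of `M(p-e₁-e₂)`. -/
def beta2 (M : PersMod 𝔽 (ℤ × ℤ)) (p : ℤ × ℤ) : ℕ :=
  finrank 𝔽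
    ↥(LinearMap.ker (M.φ (le_sub_e12_e1 p)) ⊓ LinearMap.ker (M.φ (le_sub_e12_e2 p)))

/-- The `1`-st bigraded Betti number of `M : ℤ² → vec` at `p`, via the Koszul
complex characterization. -/
def beta1 (M : PersMod 𝔽 (ℤ × ℤ)) (p : ℤ × ℤ) : ℤ :=
  (beta0 M p : ℤ) + (beta2 M p : ℤ)
    - (finrank 𝔽 (M.V p) : ℤ) + (finrank 𝔽 (M.V (p.1 - 1, p.2)) : ℤ)
    + (finrank 𝔽 (M.V (p.1, p.2 - 1)) : ℤ) - (finrank 𝔽 (M.V (p.1 - 1, p.2 - 1)) : ℤ)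

/-- The maximal element of the grid `[m] × [n]` below a point `p ≥ (0,0)` of `ℤ²`. -/
def clamp (m n : ℕ) (p : ℤ × ℤ) : Fin (m + 1) × Fin (n + 1) :=
  (⟨min p.1.toNat m, Nat.lt_succ_of_le (min_le_right _ _)⟩,
   ⟨min p.2.toNat n, Nat.lt_succ_of_le (min_le_right _ _)⟩)

lemma clamp_mono {m n : ℕ} {p q : ℤ × ℤ} (h : p ≤ q) : clamp m n p ≤ clamp m n q := by
  obtain ⟨h1, h2⟩ := Prod.le_def.mp h
  refine Prod.le_def.mpr ⟨?_, ?_⟩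
  · exact Fin.mk_le_mk.mpr (min_le_min (Int.toNat_le_toNat h1) le_rfl)
  · exact Fin.mk_le_mk.mpr (min_le_min (Int.toNat_le_toNat h2) le_rfl)

/-- `M : ℤ² → vec` is encoded by `M' : [m] × [n] → vec`. -/
def IsEncodedBy {m n : ℕ} (M : PersMod 𝔽 (ℤ × ℤ))
    (M' : PersMod 𝔽 (Fin (m + 1) × Fin (n + 1))) : Prop :=
  (∀ p : ℤ × ℤ, ¬(0 ≤ p.1 ∧ 0 ≤ p.2) → Subsingleton (M.V p)) ∧
  ∃ e : ∀ p : ℤ × ℤ, 0 ≤ p.1 → 0 ≤ p.2 → (M.V p ≃ₗ[𝔽] M'.V (clamp m n p)),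
    ∀ (p q : ℤ × ℤ) (hp1 : 0 ≤ p.1) (hp2 : 0 ≤ p.2) (hq1 : 0 ≤ q.1) (hq2 : 0 ≤ q.2)
      (hpq : p ≤ q) (v : M.V p),
      e q hq1 hq2 (M.φ hpq v) = M'.φ (clamp_mono hpq) (e p hp1 hp2 v)

/-- A point `a ∈ ℤ²` "belongs" to `J ⊆ [m] × [n]` if it is a grid point lying in `J`. -/
def gridPt {m n : ℕ} (a : ℤ × ℤ) (J : Set (Fin (m + 1) × Fin (n + 1))) : Prop :=
  ∃ x ∈ J, (((x.1 : ℕ) : ℤ), ((x.2 : ℕ) : ℤ)) = a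

end Grid
section AuxLemmas

namespace PersMod

variable {𝔽 : Type} [Field 𝔽] {P : Type} [PartialOrder P]

lemma canonicalMapAt_eq_of_le (N : PersMod 𝔽 P) {p q : P} (h : p ≤ q) :
    N.canonicalMapAt p = N.canonicalMapAt q := by
  ext x
  have hx : N.φ h (x.1 p) = x.1 q := x.2 p q h
  show N.colimRel.mkQ (DirectSum.lof 𝔽 P (fun r => N.V r) p (x.1 p))
      = N.colimRel.mkQ (DirectSum.lof 𝔽 P (fun r => N.V r) q (x.1 q))
  rw [← hx, eq_comm, Submodule.mkQ_apply, Submodule.mkQ_apply, Submodule.Quotient.eq]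
  exact Submodule.subset_span ⟨p, q, h, x.1 p, rfl⟩

lemma genRankAt_eq_of_top (N : PersMod 𝔽 P) (t : P) (ht : ∀ q, q ≤ t) :
    N.genRankAt t = finrank 𝔽
      (LinearMap.range ((LinearMap.proj t).comp N.sections.subtype)) := by
  set f := (LinearMap.proj t).comp N.sections.subtype with hf
  set j := N.colimRel.mkQ.comp (DirectSum.lof 𝔽 P (fun q => N.V q) t) with hj
  have hinj : Function.Injective j := by
    rw [← LinearMap.ker_eq_bot]
    refine (Submodule.eq_bot_iff _).mpr fun w hw => ?_
    have hmem : DirectSum.lof 𝔽 P (fun q => N.V q) t w ∈ N.colimRel := by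
      have : N.colimRel.mkQ (DirectSum.lof 𝔽 P (fun q => N.V q) t w) = 0 := hw
      rwa [← LinearMap.mem_ker, Submodule.ker_mkQ] at this
    set g : (DirectSum P fun q => N.V q) →ₗ[𝔽] N.V t :=
      DirectSum.toModule 𝔽 P (N.V t) (fun q => N.φ (ht q)) with hg
    have hker : N.colimRel ≤ LinearMap.ker g := by
      rw [colimRel, Submodule.span_le]
      rintro z ⟨p, q, hpq, v, rfl⟩
      simp only [SetLike.mem_coe, LinearMap.mem_ker, map_sub, hg,
        DirectSum.toModule_lof]
      have h2 := LinearMap.congr_fun (N.φ_comp hpq (ht q)) v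
      simp only [LinearMap.comp_apply] at h2
      rw [h2]
      exact sub_eq_zero.mpr rfl
    have h0 : g (DirectSum.lof 𝔽 P (fun q => N.V q) t w) = 0 := hker hmem
    rw [hg, DirectSum.toModule_lof] at h0
    have hid : N.φ (ht t) = LinearMap.id := N.φ_refl t
    rwa [hid, LinearMap.id_apply] at h0
  have h1 : N.genRankAt t = finrank 𝔽 (LinearMap.range (j.comp f)) := rfl
  rw [h1, LinearMap.range_comp]
  exact ((Submodule.equivMapOfInjective j hinj (LinearMap.range f)).finrank_eq).symm

lemma rkInv_eq_of_top (N : PersMod 𝔽 P) (I : Set P) (t : P) (htI : t ∈ I)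
    (htop : ∀ q ∈ I, q ≤ t) :
    N.rkInv I = finrank 𝔽 (LinearMap.range
      ((LinearMap.proj (⟨t, htI⟩ : I)).comp (N.restrict I).sections.subtype)) := by
  have hne : I.Nonempty := ⟨t, htI⟩
  rw [rkInv, dif_pos hne]
  have h1 : (⟨hne.choose, hne.choose_spec⟩ : I) ≤ ⟨t, htI⟩ := htop _ hne.choose_spec
  rw [genRankAt, (N.restrict I).canonicalMapAt_eq_of_le h1]
  exact (N.restrict I).genRankAt_eq_of_top ⟨t, htI⟩ (fun q => htop q.1 q.2)

lemma range_proj_of_bot (N : PersMod 𝔽 P) (I : Set P) (b t : P) (hbI : b ∈ I)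
    (htI : t ∈ I) (hbot : ∀ q ∈ I, b ≤ q) :
    LinearMap.range ((LinearMap.proj (⟨t, htI⟩ : I)).comp (N.restrict I).sections.subtype)
      = LinearMap.range (N.φ (hbot t htI)) := by
  ext w
  simp only [LinearMap.mem_range]
  constructor
  · rintro ⟨x, rfl⟩
    exact ⟨x.1 ⟨b, hbI⟩, x.2 ⟨b, hbI⟩ ⟨t, htI⟩ (hbot t htI)⟩
  · rintro ⟨u, rfl⟩
    refine ⟨⟨fun q => N.φ (hbot q.1 q.2) u, ?_⟩, rfl⟩
    intro q r h
    have h2 := LinearMap.congr_fun (N.φ_comp (hbot q.1 q.2) h) u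
    simp only [LinearMap.comp_apply] at h2
    exact h2

lemma rkInv_single (N : PersMod 𝔽 P) (a : P) : N.rkInv {a} = finrank 𝔽 (N.V a) := by
  have haI : a ∈ ({a} : Set P) := rfl
  rw [N.rkInv_eq_of_top {a} a haI (fun q hq => le_of_eq hq),
    N.range_proj_of_bot {a} a a haI haI (fun q hq => ge_of_eq hq)]
  have hid : N.φ ((fun q hq => ge_of_eq hq) a haI) = LinearMap.id := N.φ_refl a
  rw [hid, LinearMap.range_id]
  exact finrank_top 𝔽 (N.V a)

lemma rkInv_pair (N : PersMod 𝔽 P) {b a : P} (h : b ≤ a) :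
    N.rkInv {b, a} = finrank 𝔽 (LinearMap.range (N.φ h)) := by
  have haI : a ∈ ({b, a} : Set P) := Or.inr rfl
  have hbI : b ∈ ({b, a} : Set P) := Or.inl rfl
  have htop : ∀ q ∈ ({b, a} : Set P), q ≤ a := by rintro q (rfl | rfl); exacts [h, le_rfl]
  have hbot : ∀ q ∈ ({b, a} : Set P), b ≤ q := by rintro q (rfl | rfl); exacts [le_rfl, h]
  rw [N.rkInv_eq_of_top {b, a} a haI htop, N.range_proj_of_bot {b, a} b a hbI haI hbot]
  rfl

end PersMod

end AuxLemmas
section TripleLemma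

namespace PersMod

variable {𝔽 : Type} [Field 𝔽] {P : Type} [PartialOrder P]

/-- Auxiliary section function on a three-element poset `{b, c, t}`. -/
def triFun (N : PersMod 𝔽 P) (b c t : P) (u : N.V b) (v : N.V c) (w : N.V t) :
    ∀ q : ↥({b, c, t} : Set P), N.V q.1 := fun q =>
  if h : q.1 = b then cast (congrArg N.V h).symm u
  else if h2 : q.1 = c then cast (congrArg N.V h2).symm v
  else cast (congrArg N.V (by
    rcases q.2 with h' | h' | h'
    · exact absurd h' h
    · exact absurd h' h2
    · exact h')).symm w

lemma triFun_b (N : PersMod 𝔽 P) (b c t : P) (u : N.V b) (v : N.V c) (w : N.V t)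
    (hb : b ∈ ({b, c, t} : Set P)) : N.triFun b c t u v w ⟨b, hb⟩ = u := by
  rw [triFun, dif_pos rfl]; rfl

lemma triFun_c (N : PersMod 𝔽 P) (b c t : P) (u : N.V b) (v : N.V c) (w : N.V t)
    (hcb : c ≠ b) (hc : c ∈ ({b, c, t} : Set P)) : N.triFun b c t u v w ⟨c, hc⟩ = v := by
  rw [triFun, dif_neg hcb, dif_pos rfl]; rfl

lemma triFun_t (N : PersMod 𝔽 P) (b c t : P) (u : N.V b) (v : N.V c) (w : N.V t)
    (htb : t ≠ b) (htc : t ≠ c) (ht : t ∈ ({b, c, t} : Set P)) :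
    N.triFun b c t u v w ⟨t, ht⟩ = w := by
  rw [triFun, dif_neg htb, dif_neg htc]; rfl

lemma rkInv_triple (N : PersMod 𝔽 P) {b c t : P}
    (hbt : b ≤ t) (hct : c ≤ t) (hbc : ¬ b ≤ c) (hcb : ¬ c ≤ b)
    (hbtne : b ≠ t) (hctne : c ≠ t) :
    N.rkInv {b, c, t} = finrank 𝔽
      ((LinearMap.range (N.φ hbt) ⊓ LinearMap.range (N.φ hct) :
        Submodule 𝔽 (N.V t)) : Submodule 𝔽 (N.V t)) := by
  have hbnc : b ≠ c := fun h => hbc (le_of_eq h)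
  have htI : t ∈ ({b, c, t} : Set P) := Or.inr (Or.inr rfl)
  have hbI : b ∈ ({b, c, t} : Set P) := Or.inl rfl
  have hcI : c ∈ ({b, c, t} : Set P) := Or.inr (Or.inl rfl)
  have htop : ∀ q ∈ ({b, c, t} : Set P), q ≤ t := by
    rintro q (rfl | rfl | rfl); exacts [hbt, hct, le_rfl]
  rw [N.rkInv_eq_of_top {b, c, t} t htI htop]
  have hre : LinearMap.range ((LinearMap.proj (⟨t, htI⟩ : ({b, c, t} : Set P))).comp
      (N.restrict {b, c, t}).sections.subtype)
      = (LinearMap.range (N.φ hbt) ⊓ LinearMap.range (N.φ hct) : Submodule 𝔽 (N.V t)) := by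
    ext w
    simp only [LinearMap.mem_range, Submodule.mem_inf]
    constructor
    · rintro ⟨x, rfl⟩
      exact ⟨⟨x.1 ⟨b, hbI⟩, x.2 ⟨b, hbI⟩ ⟨t, htI⟩ hbt⟩,
             ⟨x.1 ⟨c, hcI⟩, x.2 ⟨c, hcI⟩ ⟨t, htI⟩ hct⟩⟩
    · rintro ⟨⟨u, hu⟩, ⟨v, hv⟩⟩
      refine ⟨⟨N.triFun b c t u v w, ?_⟩, ?_⟩
      · rintro ⟨qv, hq⟩ ⟨rv, hr⟩ hle
        rcases hq with rfl | rfl | rfl <;> rcases hr with rfl | rfl | rfl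
        · -- b b
          erw [N.triFun_b]
          exact LinearMap.congr_fun (N.φ_refl _) _
        · exact absurd hle hbc
        · erw [N.triFun_b, N.triFun_t _ _ _ _ _ _ (Ne.symm hbtne) (Ne.symm hctne)]
          exact hu
        · exact absurd hle hcb
        · erw [N.triFun_c _ _ _ _ _ _ (Ne.symm hbnc)]
          exact LinearMap.congr_fun (N.φ_refl _) _
        · erw [N.triFun_c _ _ _ _ _ _ (Ne.symm hbnc),
            N.triFun_t _ _ _ _ _ _ (Ne.symm hbtne) (Ne.symm hctne)]
          exact hv
        · exact absurd (le_antisymm hbt hle) hbtne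
        · exact absurd (le_antisymm hct hle) hctne
        · erw [N.triFun_t _ _ _ _ _ _ (Ne.symm hbtne) (Ne.symm hctne)]
          exact LinearMap.congr_fun (N.φ_refl _) _
      · exact N.triFun_t _ _ _ _ _ _ (Ne.symm hbtne) (Ne.symm hctne) htI
  rw [hre]; rfl

end PersMod

end TripleLemma
section FinsumLemmas

variable {α : Type} [Fintype α]

lemma finsum_cond_eq_sum_if (f : α → ℤ) (Pr : α → Prop) :
    (∑ᶠ (J : α) (_ : Pr J), f J) = ∑ J : α, if Pr J then f J else 0 := by
  rw [finsum_eq_sum_of_fintype]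
  exact Finset.sum_congr rfl fun J _ => finsum_eq_if

lemma finsum_IE (f : α → ℤ) (A B C : α → Prop) :
    (∑ᶠ (J : α) (_ : A J ∧ ¬ B J ∧ ¬ C J), f J)
      = (∑ᶠ (J : α) (_ : A J), f J) - (∑ᶠ (J : α) (_ : A J ∧ B J), f J)
        - (∑ᶠ (J : α) (_ : A J ∧ C J), f J)
        + (∑ᶠ (J : α) (_ : A J ∧ B J ∧ C J), f J) := by
  simp only [finsum_cond_eq_sum_if]
  rw [← Finset.sum_sub_distrib, ← Finset.sum_sub_distrib, ← Finset.sum_add_distrib]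
  refine Finset.sum_congr rfl fun J _ => ?_
  by_cases hA : A J <;> by_cases hB : B J <;> by_cases hC : C J <;>
    simp [hA, hB, hC]

lemma finsum_cond_congr (f : α → ℤ) (Pr Q : α → Prop) (h : ∀ a, Pr a ↔ Q a) :
    (∑ᶠ (J : α) (_ : Pr J), f J) = ∑ᶠ (J : α) (_ : Q J), f J := by
  refine finsum_congr fun J => ?_
  rw [propext (h J)]

lemma finsum_cond_false (f : α → ℤ) (Pr : α → Prop) (h : ∀ a, ¬ Pr a) :
    (∑ᶠ (J : α) (_ : Pr J), f J) = 0 := by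
  rw [finsum_cond_eq_sum_if]
  simp [h]

end FinsumLemmas

section PCLemmas

variable {P : Type} [PartialOrder P]

lemma isPathConnIn_single (a : P) : IsPathConnIn ({a} : Set P) := by
  refine ⟨⟨a, rfl⟩, ?_⟩
  rintro p rfl q rfl
  exact Relation.ReflTransGen.refl

private lemma pc_symm (I : Set P) :
    Symmetric (fun x y : P => x ∈ I ∧ y ∈ I ∧ (x ⋖ y ∨ y ⋖ x)) :=
  fun _ _ ⟨h1, h2, h3⟩ => ⟨h2, h1, h3.symm⟩

lemma isPathConnIn_pair {b a : P} (h : b ⋖ a) : IsPathConnIn ({b, a} : Set P) := by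
  refine ⟨⟨b, Or.inl rfl⟩, ?_⟩
  have hstep : Relation.ReflTransGen
      (fun x y : P => x ∈ ({b, a} : Set P) ∧ y ∈ ({b, a} : Set P) ∧ (x ⋖ y ∨ y ⋖ x)) b a :=
    Relation.ReflTransGen.single ⟨Or.inl rfl, Or.inr rfl, Or.inl h⟩
  rintro p (rfl | rfl) q (rfl | rfl)
  · exact Relation.ReflTransGen.refl
  · exact hstep
  · exact Std.Symm.symm (self := @Relation.ReflTransGen.stdSymm _ _ ⟨fun _ _ h => pc_symm _ h⟩) _ _ hstep
  · exact Relation.ReflTransGen.refl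

lemma isPathConnIn_triple {b c a : P} (hb : b ⋖ a) (hc : c ⋖ a) :
    IsPathConnIn ({b, c, a} : Set P) := by
  refine ⟨⟨b, Or.inl rfl⟩, ?_⟩
  intro p hp q hq
  set R := fun x y : P => x ∈ ({b, c, a} : Set P) ∧ y ∈ ({b, c, a} : Set P) ∧ (x ⋖ y ∨ y ⋖ x)
    with hR
  have ha : ∀ x ∈ ({b, c, a} : Set P), Relation.ReflTransGen R x a := by
    rintro x (rfl | rfl | rfl)
    · exact Relation.ReflTransGen.single ⟨Or.inl rfl, Or.inr (Or.inr rfl), Or.inl hb⟩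
    · exact Relation.ReflTransGen.single ⟨Or.inr (Or.inl rfl), Or.inr (Or.inr rfl), Or.inl hc⟩
    · exact Relation.ReflTransGen.refl
  exact (ha p hp).trans (Std.Symm.symm (self := @Relation.ReflTransGen.stdSymm _ _ ⟨fun _ _ h => pc_symm _ h⟩) _ _ (ha q hq))

end PCLemmas

section GridLemmas

lemma fin_covby {k : ℕ} {x y : Fin k} (h : x.val + 1 = y.val) : x ⋖ y := by
  constructor
  · exact Fin.lt_def.mpr (by omega)
  · intro z hz1 hz2
    rw [Fin.lt_def] at hz1 hz2
    omega

lemma gridPt_iff {m n : ℕ} (q : ℤ × ℤ) (h1 : 0 ≤ q.1) (h2 : q.1 ≤ (m : ℤ))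
    (h3 : 0 ≤ q.2) (h4 : q.2 ≤ (n : ℤ)) (J : Set (Fin (m + 1) × Fin (n + 1))) :
    gridPt q J ↔ clamp m n q ∈ J := by
  constructor
  · rintro ⟨x, hx, hxe⟩
    obtain ⟨e1, e2⟩ := Prod.ext_iff.mp hxe
    have : clamp m n q = x := by
      have i1 : x.1.val < m + 1 := x.1.isLt
      have i2 : x.2.val < n + 1 := x.2.isLt
      refine Prod.ext ?_ ?_ <;> refine Fin.ext ?_ <;> simp only [clamp] <;> omega
    rwa [this]
  · intro h
    refine ⟨clamp m n q, h, ?_⟩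
    refine Prod.ext_iff.mpr ⟨?_, ?_⟩ <;> simp only [clamp] <;> omega

lemma gridPt_false {m n : ℕ} (q : ℤ × ℤ)
    (h : q.1 < 0 ∨ (m : ℤ) < q.1 ∨ q.2 < 0 ∨ (n : ℤ) < q.2)
    (J : Set (Fin (m + 1) × Fin (n + 1))) : ¬ gridPt q J := by
  rintro ⟨x, hx, hxe⟩
  obtain ⟨e1, e2⟩ := Prod.ext_iff.mp hxe
  have i1 : x.1.val < m + 1 := x.1.isLt
  have i2 : x.2.val < n + 1 := x.2.isLt
  omega

end GridLemmas
section TransferLemmas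

variable {𝔽 : Type} [Field 𝔽] {P : Type} [PartialOrder P]

lemma phi_surj_of_eq (N : PersMod 𝔽 P) {x y : P} (h : x ≤ y) (hxy : x = y) :
    Function.Surjective (N.φ h) := by
  subst hxy
  have hid : N.φ h = LinearMap.id := N.φ_refl x
  rw [hid]
  exact fun w => ⟨w, rfl⟩

lemma range_eq_bot_of_subsingleton {A B : Type} [AddCommGroup A] [Module 𝔽 A]
    [AddCommGroup B] [Module 𝔽 B] (f : A →ₗ[𝔽] B) (h : Subsingleton A) :
    LinearMap.range f = ⊥ := by
  rw [LinearMap.range_eq_bot]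
  refine LinearMap.ext fun v => ?_
  rw [Subsingleton.elim v 0]
  simp

lemma covby_fst {k l : ℕ} {x y : Fin k × Fin l} (h1 : x.1.val + 1 = y.1.val)
    (h2 : x.2 = y.2) : x ⋖ y :=
  Prod.mk_covBy_mk_iff.mpr (Or.inl ⟨fin_covby h1, h2⟩)

lemma covby_snd {k l : ℕ} {x y : Fin k × Fin l} (h1 : x.2.val + 1 = y.2.val)
    (h2 : x.1 = y.1) : x ⋖ y :=
  Prod.mk_covBy_mk_iff.mpr (Or.inr ⟨fin_covby h1, h2⟩)

end TransferLemmas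
section MainAux

variable {𝔽 : Type} [Field 𝔽]

lemma beta0_eq_zero_of_surj (M : PersMod 𝔽 (ℤ × ℤ)) (p : ℤ × ℤ)
    (h : Function.Surjective (M.φ (le_sub_e1 p)) ∨
         Function.Surjective (M.φ (le_sub_e2 p))) : beta0 M p = 0 := by
  have htop : LinearMap.range ((M.φ (le_sub_e1 p)).coprod (M.φ (le_sub_e2 p))) = ⊤ := by
    rcases h with h | h
    · rw [LinearMap.range_coprod, LinearMap.range_eq_top.mpr h, top_sup_eq]
    · rw [LinearMap.range_coprod, LinearMap.range_eq_top.mpr h, sup_top_eq]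
  have hss : Subsingleton
      (M.V p ⧸ LinearMap.range ((M.φ (le_sub_e1 p)).coprod (M.φ (le_sub_e2 p)))) :=
    Submodule.Quotient.subsingleton_iff.mpr htop
  exact @Module.finrank_zero_of_subsingleton _ _ _ _ _ _ hss

end MainAux
set_option maxHeartbeats 4000000 in
/-- If `M : ℤ² → vec` is encoded by `M' : [m] × [n] → vec`, then
for `p` in `[0, m+1] × [0, n+1]`, the zeroth bigraded Betti number of `M` at `p`
is the sum of the generalized persistence diagram of `M'` over the
path-connected subposets `J ∈ Con([m] × [n])` with `p ∈ J`, `p - e₁ ∉ J`,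
`p - e₂ ∉ J`. -/
theorem beta0_eq_sum_dgm (𝔽 : Type) [Field 𝔽] (m n : ℕ)
    (M' : PersMod 𝔽 (Fin (m + 1) × Fin (n + 1))) (M : PersMod 𝔽 (ℤ × ℤ))
    (henc : IsEncodedBy M M')
    (dgm : Set (Fin (m + 1) × Fin (n + 1)) → ℤ)
    (hdgm : ∀ I : Set (Fin (m + 1) × Fin (n + 1)), IsPathConnIn I →
      (M'.rkInv I : ℤ) =
        ∑ᶠ (J : Set (Fin (m + 1) × Fin (n + 1))) (_ : IsPathConnIn J ∧ I ⊆ J), dgm J)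
    (p : ℤ × ℤ) (hp1 : 0 ≤ p.1) (hp2 : p.1 ≤ (m : ℤ) + 1)
    (hp3 : 0 ≤ p.2) (hp4 : p.2 ≤ (n : ℤ) + 1) :
    (beta0 M p : ℤ) =
      ∑ᶠ (J : Set (Fin (m + 1) × Fin (n + 1)))
        (_ : IsPathConnIn J ∧ gridPt p J ∧
              ¬ gridPt (p.1 - 1, p.2) J ∧ ¬ gridPt (p.1, p.2 - 1) J),
        dgm J := by
  classical
  obtain ⟨hzero, e, he⟩ := henc
  by_cases hT : p.1 = (m : ℤ) + 1 ∨ p.2 = (n : ℤ) + 1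
  · -- boundary case: both sides vanish
    have hRHS : (∑ᶠ (J : Set (Fin (m + 1) × Fin (n + 1)))
        (_ : IsPathConnIn J ∧ gridPt p J ∧
              ¬ gridPt (p.1 - 1, p.2) J ∧ ¬ gridPt (p.1, p.2 - 1) J), dgm J) = 0 := by
      refine finsum_cond_false _ _ fun J hJ => ?_
      rcases hT with h | h
      · exact gridPt_false p (Or.inr (Or.inl (by omega))) J hJ.2.1
      · exact gridPt_false p (Or.inr (Or.inr (Or.inr (by omega)))) J hJ.2.1
    rw [hRHS]
    norm_cast
    rcases hT with h | h
    · have hb1 : (0 : ℤ) ≤ p.1 - 1 := by omega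
      have hclampeq : clamp m n (p.1 - 1, p.2) = clamp m n p := by
        refine Prod.ext (Fin.ext ?_) (Fin.ext ?_) <;> simp [clamp] <;> omega
      refine beta0_eq_zero_of_surj M p (Or.inl fun w => ?_)
      obtain ⟨z, hz⟩ :=
        phi_surj_of_eq M' (clamp_mono (le_sub_e1 p)) hclampeq (e p hp1 hp3 w)
      refine ⟨(e (p.1 - 1, p.2) hb1 hp3).symm z, (e p hp1 hp3).injective ?_⟩
      rw [he (p.1 - 1, p.2) p hb1 hp3 hp1 hp3 (le_sub_e1 p) _,
        LinearEquiv.apply_symm_apply, hz]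
    · have hc2 : (0 : ℤ) ≤ p.2 - 1 := by omega
      have hclampeq : clamp m n (p.1, p.2 - 1) = clamp m n p := by
        refine Prod.ext (Fin.ext ?_) (Fin.ext ?_) <;> simp [clamp] <;> omega
      refine beta0_eq_zero_of_surj M p (Or.inr fun w => ?_)
      obtain ⟨z, hz⟩ :=
        phi_surj_of_eq M' (clamp_mono (le_sub_e2 p)) hclampeq (e p hp1 hp3 w)
      refine ⟨(e (p.1, p.2 - 1) hp1 hc2).symm z, (e p hp1 hp3).injective ?_⟩
      rw [he (p.1, p.2 - 1) p hp1 hc2 hp1 hp3 (le_sub_e2 p) _,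
        LinearEquiv.apply_symm_apply, hz]
  · push_neg at hT
    have hTm : p.1 ≤ (m : ℤ) := by omega
    have hTn : p.2 ≤ (n : ℤ) := by omega
    -- rewrite the RHS via inclusion-exclusion
    have hassoc : (∑ᶠ (J : Set (Fin (m + 1) × Fin (n + 1)))
        (_ : IsPathConnIn J ∧ gridPt p J ∧
              ¬ gridPt (p.1 - 1, p.2) J ∧ ¬ gridPt (p.1, p.2 - 1) J), dgm J)
        = ∑ᶠ (J : Set (Fin (m + 1) × Fin (n + 1)))
            (_ : (IsPathConnIn J ∧ gridPt p J) ∧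
              ¬ gridPt (p.1 - 1, p.2) J ∧ ¬ gridPt (p.1, p.2 - 1) J), dgm J :=
      finsum_cond_congr _ _ _ (fun J => by tauto)
    rw [hassoc, finsum_IE dgm (fun J => IsPathConnIn J ∧ gridPt p J)
      (fun J => gridPt (p.1 - 1, p.2) J) (fun J => gridPt (p.1, p.2 - 1) J)]
    -- the A-sum
    have hA : (∑ᶠ (J : Set (Fin (m + 1) × Fin (n + 1)))
        (_ : IsPathConnIn J ∧ gridPt p J), dgm J)
        = (finrank 𝔽 (M'.V (clamp m n p)) : ℤ) := by
      have h1 : ∀ J : Set (Fin (m + 1) × Fin (n + 1)),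
          (IsPathConnIn J ∧ gridPt p J) ↔
            (IsPathConnIn J ∧ ({clamp m n p} : Set _) ⊆ J) := fun J =>
        and_congr_right fun _ => by
          rw [gridPt_iff p hp1 hTm hp3 hTn J, Set.singleton_subset_iff]
      rw [finsum_cond_congr _ _ _ h1, ← hdgm _ (isPathConnIn_single _)]
      exact_mod_cast M'.rkInv_single (clamp m n p)
    -- transfer of the left-hand side: generic pieces
    have hquot : beta0 M p + finrank 𝔽
        (LinearMap.range ((M.φ (le_sub_e1 p)).coprod (M.φ (le_sub_e2 p))))
        = finrank 𝔽 (M.V p) :=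
      Submodule.finrank_quotient_add_finrank _
    have hfr : finrank 𝔽 (M.V p) = finrank 𝔽 (M'.V (clamp m n p)) :=
      (e p hp1 hp3).finrank_eq
    have hmapfr : finrank 𝔽 (Submodule.map (e p hp1 hp3).toLinearMap
        (LinearMap.range ((M.φ (le_sub_e1 p)).coprod (M.φ (le_sub_e2 p)))))
        = finrank 𝔽 (LinearMap.range ((M.φ (le_sub_e1 p)).coprod (M.φ (le_sub_e2 p)))) :=
      LinearEquiv.finrank_map_eq _ _
    by_cases hx : 1 ≤ p.1 <;> by_cases hy : 1 ≤ p.2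
    · -- main case
      have hb1 : (0 : ℤ) ≤ p.1 - 1 := by omega
      have hc2 : (0 : ℤ) ≤ p.2 - 1 := by omega
      have hBiff : ∀ J : Set (Fin (m + 1) × Fin (n + 1)),
          gridPt (p.1 - 1, p.2) J ↔ clamp m n (p.1 - 1, p.2) ∈ J := fun J =>
        gridPt_iff (p.1 - 1, p.2) hb1 (show p.1 - 1 ≤ (m : ℤ) by omega) hp3 hTn J
      have hCiff : ∀ J : Set (Fin (m + 1) × Fin (n + 1)),
          gridPt (p.1, p.2 - 1) J ↔ clamp m n (p.1, p.2 - 1) ∈ J := fun J =>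
        gridPt_iff (p.1, p.2 - 1) hp1 hTm hc2 (show p.2 - 1 ≤ (n : ℤ) by omega) J
      have covb : clamp m n (p.1 - 1, p.2) ⋖ clamp m n p :=
        covby_fst (by simp [clamp]; omega) (by refine Fin.ext ?_; simp [clamp])
      have covc : clamp m n (p.1, p.2 - 1) ⋖ clamp m n p :=
        covby_snd (by simp [clamp]; omega) (by refine Fin.ext ?_; simp [clamp])
      have hbc : ¬ clamp m n (p.1 - 1, p.2) ≤ clamp m n (p.1, p.2 - 1) := by
        intro hle
        simp [clamp, Prod.le_def, Fin.le_def] at hle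
        omega
      have hcb : ¬ clamp m n (p.1, p.2 - 1) ≤ clamp m n (p.1 - 1, p.2) := by
        intro hle
        simp [clamp, Prod.le_def, Fin.le_def] at hle
        omega
      have hbne : clamp m n (p.1 - 1, p.2) ≠ clamp m n p := by
        intro hh
        have h2 := congrArg (fun z : Fin (m + 1) × Fin (n + 1) => z.1.val) hh
        simp [clamp] at h2
        omega
      have hcne : clamp m n (p.1, p.2 - 1) ≠ clamp m n p := by
        intro hh
        have h2 := congrArg (fun z : Fin (m + 1) × Fin (n + 1) => z.2.val) hh
        simp [clamp] at h2
        omega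
      have hB : (∑ᶠ (J : Set (Fin (m + 1) × Fin (n + 1)))
          (_ : (IsPathConnIn J ∧ gridPt p J) ∧ gridPt (p.1 - 1, p.2) J), dgm J)
          = (finrank 𝔽 (LinearMap.range (M'.φ (clamp_mono (le_sub_e1 p)))) : ℤ) := by
        have h1 : ∀ J : Set (Fin (m + 1) × Fin (n + 1)),
            ((IsPathConnIn J ∧ gridPt p J) ∧ gridPt (p.1 - 1, p.2) J) ↔
              (IsPathConnIn J ∧
                ({clamp m n (p.1 - 1, p.2), clamp m n p} : Set _) ⊆ J) := by
          intro J
          rw [gridPt_iff p hp1 hTm hp3 hTn J, hBiff J, Set.insert_subset_iff,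
            Set.singleton_subset_iff]
          tauto
        rw [finsum_cond_congr _ _ _ h1, ← hdgm _ (isPathConnIn_pair covb)]
        exact_mod_cast M'.rkInv_pair (clamp_mono (le_sub_e1 p))
      have hC : (∑ᶠ (J : Set (Fin (m + 1) × Fin (n + 1)))
          (_ : (IsPathConnIn J ∧ gridPt p J) ∧ gridPt (p.1, p.2 - 1) J), dgm J)
          = (finrank 𝔽 (LinearMap.range (M'.φ (clamp_mono (le_sub_e2 p)))) : ℤ) := by
        have h1 : ∀ J : Set (Fin (m + 1) × Fin (n + 1)),
            ((IsPathConnIn J ∧ gridPt p J) ∧ gridPt (p.1, p.2 - 1) J) ↔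
              (IsPathConnIn J ∧
                ({clamp m n (p.1, p.2 - 1), clamp m n p} : Set _) ⊆ J) := by
          intro J
          rw [gridPt_iff p hp1 hTm hp3 hTn J, hCiff J, Set.insert_subset_iff,
            Set.singleton_subset_iff]
          tauto
        rw [finsum_cond_congr _ _ _ h1, ← hdgm _ (isPathConnIn_pair covc)]
        exact_mod_cast M'.rkInv_pair (clamp_mono (le_sub_e2 p))
      have hBC : (∑ᶠ (J : Set (Fin (m + 1) × Fin (n + 1)))
          (_ : (IsPathConnIn J ∧ gridPt p J) ∧ gridPt (p.1 - 1, p.2) J ∧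
            gridPt (p.1, p.2 - 1) J), dgm J)
          = (finrank 𝔽 ((LinearMap.range (M'.φ (clamp_mono (le_sub_e1 p)))
              ⊓ LinearMap.range (M'.φ (clamp_mono (le_sub_e2 p)))) :
                Submodule 𝔽 (M'.V (clamp m n p))) : ℤ) := by
        have h1 : ∀ J : Set (Fin (m + 1) × Fin (n + 1)),
            ((IsPathConnIn J ∧ gridPt p J) ∧ gridPt (p.1 - 1, p.2) J ∧
              gridPt (p.1, p.2 - 1) J) ↔
              (IsPathConnIn J ∧
                ({clamp m n (p.1 - 1, p.2), clamp m n (p.1, p.2 - 1), clamp m n p} :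
                  Set _) ⊆ J) := by
          intro J
          rw [gridPt_iff p hp1 hTm hp3 hTn J, hBiff J, hCiff J,
            Set.insert_subset_iff, Set.insert_subset_iff, Set.singleton_subset_iff]
          tauto
        rw [finsum_cond_congr _ _ _ h1, ← hdgm _ (isPathConnIn_triple covb covc)]
        exact_mod_cast M'.rkInv_triple (clamp_mono (le_sub_e1 p))
          (clamp_mono (le_sub_e2 p)) hbc hcb hbne hcne
      rw [hA, hB, hC, hBC]
      -- now transfer the left-hand side
      have hcomm1 : (e p hp1 hp3).toLinearMap ∘ₗ M.φ (le_sub_e1 p)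
          = (M'.φ (clamp_mono (le_sub_e1 p))) ∘ₗ (e (p.1 - 1, p.2) hb1 hp3).toLinearMap :=
        LinearMap.ext fun v => he (p.1 - 1, p.2) p hb1 hp3 hp1 hp3 (le_sub_e1 p) v
      have hcomm2 : (e p hp1 hp3).toLinearMap ∘ₗ M.φ (le_sub_e2 p)
          = (M'.φ (clamp_mono (le_sub_e2 p))) ∘ₗ (e (p.1, p.2 - 1) hp1 hc2).toLinearMap :=
        LinearMap.ext fun v => he (p.1, p.2 - 1) p hp1 hc2 hp1 hp3 (le_sub_e2 p) v
      have hm1 : Submodule.map (e p hp1 hp3).toLinearMap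
          (LinearMap.range (M.φ (le_sub_e1 p)))
          = LinearMap.range (M'.φ (clamp_mono (le_sub_e1 p))) := by
        rw [← LinearMap.range_comp, hcomm1, LinearMap.range_comp_of_range_eq_top]
        exact LinearEquiv.range _
      have hm2 : Submodule.map (e p hp1 hp3).toLinearMap
          (LinearMap.range (M.φ (le_sub_e2 p)))
          = LinearMap.range (M'.φ (clamp_mono (le_sub_e2 p))) := by
        rw [← LinearMap.range_comp, hcomm2, LinearMap.range_comp_of_range_eq_top]
        exact LinearEquiv.range _
      have hmap : Submodule.map (e p hp1 hp3).toLinearMap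
          (LinearMap.range ((M.φ (le_sub_e1 p)).coprod (M.φ (le_sub_e2 p))))
          = LinearMap.range (M'.φ (clamp_mono (le_sub_e1 p)))
            ⊔ LinearMap.range (M'.φ (clamp_mono (le_sub_e2 p))) := by
        rw [LinearMap.range_coprod, Submodule.map_sup, hm1, hm2]
      rw [hmap] at hmapfr
      have hsupinf := Submodule.finrank_sup_add_finrank_inf_eq
        (LinearMap.range (M'.φ (clamp_mono (le_sub_e1 p))))
        (LinearMap.range (M'.φ (clamp_mono (le_sub_e2 p))))
      omega
    · -- p.2 = 0
      have hb1 : (0 : ℤ) ≤ p.1 - 1 := by omega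
      have hBiff : ∀ J : Set (Fin (m + 1) × Fin (n + 1)),
          gridPt (p.1 - 1, p.2) J ↔ clamp m n (p.1 - 1, p.2) ∈ J := fun J =>
        gridPt_iff (p.1 - 1, p.2) hb1 (show p.1 - 1 ≤ (m : ℤ) by omega) hp3 hTn J
      have covb : clamp m n (p.1 - 1, p.2) ⋖ clamp m n p :=
        covby_fst (by simp [clamp]; omega) (by refine Fin.ext ?_; simp [clamp])
      have hB : (∑ᶠ (J : Set (Fin (m + 1) × Fin (n + 1)))
          (_ : (IsPathConnIn J ∧ gridPt p J) ∧ gridPt (p.1 - 1, p.2) J), dgm J)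
          = (finrank 𝔽 (LinearMap.range (M'.φ (clamp_mono (le_sub_e1 p)))) : ℤ) := by
        have h1 : ∀ J : Set (Fin (m + 1) × Fin (n + 1)),
            ((IsPathConnIn J ∧ gridPt p J) ∧ gridPt (p.1 - 1, p.2) J) ↔
              (IsPathConnIn J ∧
                ({clamp m n (p.1 - 1, p.2), clamp m n p} : Set _) ⊆ J) := by
          intro J
          rw [gridPt_iff p hp1 hTm hp3 hTn J, hBiff J, Set.insert_subset_iff,
            Set.singleton_subset_iff]
          tauto
        rw [finsum_cond_congr _ _ _ h1, ← hdgm _ (isPathConnIn_pair covb)]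
        exact_mod_cast M'.rkInv_pair (clamp_mono (le_sub_e1 p))
      have hC : (∑ᶠ (J : Set (Fin (m + 1) × Fin (n + 1)))
          (_ : (IsPathConnIn J ∧ gridPt p J) ∧ gridPt (p.1, p.2 - 1) J), dgm J) = 0 :=
        finsum_cond_false _ _ fun J hJ =>
          gridPt_false (p.1, p.2 - 1) (Or.inr (Or.inr (Or.inl (by omega)))) J hJ.2
      have hBC : (∑ᶠ (J : Set (Fin (m + 1) × Fin (n + 1)))
          (_ : (IsPathConnIn J ∧ gridPt p J) ∧ gridPt (p.1 - 1, p.2) J ∧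
            gridPt (p.1, p.2 - 1) J), dgm J) = 0 :=
        finsum_cond_false _ _ fun J hJ =>
          gridPt_false (p.1, p.2 - 1) (Or.inr (Or.inr (Or.inl (by omega)))) J hJ.2.2
      rw [hA, hB, hC, hBC]
      have hcomm1 : (e p hp1 hp3).toLinearMap ∘ₗ M.φ (le_sub_e1 p)
          = (M'.φ (clamp_mono (le_sub_e1 p))) ∘ₗ (e (p.1 - 1, p.2) hb1 hp3).toLinearMap :=
        LinearMap.ext fun v => he (p.1 - 1, p.2) p hb1 hp3 hp1 hp3 (le_sub_e1 p) v
      have hm1 : Submodule.map (e p hp1 hp3).toLinearMap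
          (LinearMap.range (M.φ (le_sub_e1 p)))
          = LinearMap.range (M'.φ (clamp_mono (le_sub_e1 p))) := by
        rw [← LinearMap.range_comp, hcomm1, LinearMap.range_comp_of_range_eq_top]
        exact LinearEquiv.range _
      have hr2 : LinearMap.range (M.φ (le_sub_e2 p)) = ⊥ :=
        range_eq_bot_of_subsingleton _ (hzero (p.1, p.2 - 1) (fun hh => by
          have h2 : (0 : ℤ) ≤ p.2 - 1 := hh.2
          omega))
      have hmap : Submodule.map (e p hp1 hp3).toLinearMap
          (LinearMap.range ((M.φ (le_sub_e1 p)).coprod (M.φ (le_sub_e2 p))))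
          = LinearMap.range (M'.φ (clamp_mono (le_sub_e1 p))) := by
        rw [LinearMap.range_coprod, Submodule.map_sup, hm1, hr2, Submodule.map_bot,
          sup_bot_eq]
      rw [hmap] at hmapfr
      omega
    · -- p.1 = 0
      have hc2 : (0 : ℤ) ≤ p.2 - 1 := by omega
      have hCiff : ∀ J : Set (Fin (m + 1) × Fin (n + 1)),
          gridPt (p.1, p.2 - 1) J ↔ clamp m n (p.1, p.2 - 1) ∈ J := fun J =>
        gridPt_iff (p.1, p.2 - 1) hp1 hTm hc2 (show p.2 - 1 ≤ (n : ℤ) by omega) J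
      have covc : clamp m n (p.1, p.2 - 1) ⋖ clamp m n p :=
        covby_snd (by simp [clamp]; omega) (by refine Fin.ext ?_; simp [clamp])
      have hB : (∑ᶠ (J : Set (Fin (m + 1) × Fin (n + 1)))
          (_ : (IsPathConnIn J ∧ gridPt p J) ∧ gridPt (p.1 - 1, p.2) J), dgm J) = 0 :=
        finsum_cond_false _ _ fun J hJ =>
          gridPt_false (p.1 - 1, p.2) (Or.inl (by omega)) J hJ.2
      have hC : (∑ᶠ (J : Set (Fin (m + 1) × Fin (n + 1)))
          (_ : (IsPathConnIn J ∧ gridPt p J) ∧ gridPt (p.1, p.2 - 1) J), dgm J)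
          = (finrank 𝔽 (LinearMap.range (M'.φ (clamp_mono (le_sub_e2 p)))) : ℤ) := by
        have h1 : ∀ J : Set (Fin (m + 1) × Fin (n + 1)),
            ((IsPathConnIn J ∧ gridPt p J) ∧ gridPt (p.1, p.2 - 1) J) ↔
              (IsPathConnIn J ∧
                ({clamp m n (p.1, p.2 - 1), clamp m n p} : Set _) ⊆ J) := by
          intro J
          rw [gridPt_iff p hp1 hTm hp3 hTn J, hCiff J, Set.insert_subset_iff,
            Set.singleton_subset_iff]
          tauto
        rw [finsum_cond_congr _ _ _ h1, ← hdgm _ (isPathConnIn_pair covc)]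
        exact_mod_cast M'.rkInv_pair (clamp_mono (le_sub_e2 p))
      have hBC : (∑ᶠ (J : Set (Fin (m + 1) × Fin (n + 1)))
          (_ : (IsPathConnIn J ∧ gridPt p J) ∧ gridPt (p.1 - 1, p.2) J ∧
            gridPt (p.1, p.2 - 1) J), dgm J) = 0 :=
        finsum_cond_false _ _ fun J hJ =>
          gridPt_false (p.1 - 1, p.2) (Or.inl (by omega)) J hJ.2.1
      rw [hA, hB, hC, hBC]
      have hcomm2 : (e p hp1 hp3).toLinearMap ∘ₗ M.φ (le_sub_e2 p)
          = (M'.φ (clamp_mono (le_sub_e2 p))) ∘ₗ (e (p.1, p.2 - 1) hp1 hc2).toLinearMap :=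
        LinearMap.ext fun v => he (p.1, p.2 - 1) p hp1 hc2 hp1 hp3 (le_sub_e2 p) v
      have hm2 : Submodule.map (e p hp1 hp3).toLinearMap
          (LinearMap.range (M.φ (le_sub_e2 p)))
          = LinearMap.range (M'.φ (clamp_mono (le_sub_e2 p))) := by
        rw [← LinearMap.range_comp, hcomm2, LinearMap.range_comp_of_range_eq_top]
        exact LinearEquiv.range _
      have hr1 : LinearMap.range (M.φ (le_sub_e1 p)) = ⊥ :=
        range_eq_bot_of_subsingleton _ (hzero (p.1 - 1, p.2) (fun hh => by
          have h2 : (0 : ℤ) ≤ p.1 - 1 := hh.1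
          omega))
      have hmap : Submodule.map (e p hp1 hp3).toLinearMap
          (LinearMap.range ((M.φ (le_sub_e1 p)).coprod (M.φ (le_sub_e2 p))))
          = LinearMap.range (M'.φ (clamp_mono (le_sub_e2 p))) := by
        rw [LinearMap.range_coprod, Submodule.map_sup, hm2, hr1, Submodule.map_bot,
          bot_sup_eq]
      rw [hmap] at hmapfr
      omega
    · -- p = (0, 0)
      have hB : (∑ᶠ (J : Set (Fin (m + 1) × Fin (n + 1)))
          (_ : (IsPathConnIn J ∧ gridPt p J) ∧ gridPt (p.1 - 1, p.2) J), dgm J) = 0 :=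
        finsum_cond_false _ _ fun J hJ =>
          gridPt_false (p.1 - 1, p.2) (Or.inl (by omega)) J hJ.2
      have hC : (∑ᶠ (J : Set (Fin (m + 1) × Fin (n + 1)))
          (_ : (IsPathConnIn J ∧ gridPt p J) ∧ gridPt (p.1, p.2 - 1) J), dgm J) = 0 :=
        finsum_cond_false _ _ fun J hJ =>
          gridPt_false (p.1, p.2 - 1) (Or.inr (Or.inr (Or.inl (by omega)))) J hJ.2
      have hBC : (∑ᶠ (J : Set (Fin (m + 1) × Fin (n + 1)))
          (_ : (IsPathConnIn J ∧ gridPt p J) ∧ gridPt (p.1 - 1, p.2) J ∧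
            gridPt (p.1, p.2 - 1) J), dgm J) = 0 :=
        finsum_cond_false _ _ fun J hJ =>
          gridPt_false (p.1 - 1, p.2) (Or.inl (by omega)) J hJ.2.1
      rw [hA, hB, hC, hBC]
      have hr1 : LinearMap.range (M.φ (le_sub_e1 p)) = ⊥ :=
        range_eq_bot_of_subsingleton _ (hzero (p.1 - 1, p.2) (fun hh => by
          have h2 : (0 : ℤ) ≤ p.1 - 1 := hh.1
          omega))
      have hr2 : LinearMap.range (M.φ (le_sub_e2 p)) = ⊥ :=
        range_eq_bot_of_subsingleton _ (hzero (p.1, p.2 - 1) (fun hh => by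
          have h2 : (0 : ℤ) ≤ p.2 - 1 := hh.2
          omega))
      have hmap : Submodule.map (e p hp1 hp3).toLinearMap
          (LinearMap.range ((M.φ (le_sub_e1 p)).coprod (M.φ (le_sub_e2 p))))
          = (⊥ : Submodule 𝔽 (M'.V (clamp m n p))) := by
        rw [LinearMap.range_coprod, Submodule.map_sup, hr1, hr2, Submodule.map_bot,
          sup_bot_eq]
      rw [hmap] at hmapfr
      rw [finrank_bot] at hmapfr
      omega
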